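/- If X is a contractible continuum, then F_n(X) is contractible for each positive integer n. -/

import Mathlib

open Metric TopologicalSpace Set Filter unitInterval

/-- The n-th symmetric product: nonempty subsets with at most n points,
as a subspace of the nonempty compact subsets with the Hausdorff metric. -/
abbrev SymProd (X : Type*) [MetricSpace X] (n : ℕ) :=
  {A : NonemptyCompacts X // (A : Set X).Finite ∧ (A : Set X).ncard ≤ n}

/-- A Z-set in a metric space. -/
def IsZSet {Y : Type*} [MetricSpace Y] (A : Set Y) : Prop :=
  IsClosed A ∧ ∀ ε > 0, ∃ f : Y → Y, Continuous f ∧ (∀ y, f y ∉ A) ∧ ∀ y, dist y (f y) < ε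

/-- A Z-map: a continuous map whose image is a Z-set. -/
def IsZMap {X Y : Type*} [MetricSpace X] [MetricSpace Y] (f : X → Y) : Prop :=
  Continuous f ∧ IsZSet (Set.range f)

theorem stmt2 {X : Type*} [MetricSpace X] [CompactSpace X] [ConnectedSpace X] [Nonempty X]
    (hX : ContractibleSpace X) (n : ℕ) (hn : 0 < n) :
    ContractibleSpace (SymProd X n) := by
  obtain ⟨c, hc⟩ := (contractible_iff_id_nullhomotopic X).1 hX
  obtain ⟨H⟩ := hc
  have hUC : UniformContinuous (fun p : I × X => H p) :=
    CompactSpace.uniformContinuous_of_continuous H.continuous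
  set K : I × SymProd X n → SymProd X n := fun p =>
    ⟨⟨⟨(fun x => H (p.1, x)) '' (p.2.1 : Set X),
        p.2.1.isCompact.image (H.continuous.comp (continuous_const.prodMk continuous_id))⟩,
      p.2.1.nonempty.image _⟩,
      p.2.2.1.image _, le_trans (Set.ncard_image_le p.2.2.1) p.2.2.2⟩ with hK
  have hKc : Continuous K := by
    apply Continuous.subtype_mk
    rw [Metric.continuous_iff]
    rintro ⟨s, B⟩ ε hε
    obtain ⟨δ, hδ, hδ'⟩ := Metric.uniformContinuous_iff.1 hUC (ε / 2) (by positivity)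
    refine ⟨δ, hδ, ?_⟩
    rintro ⟨t, A⟩ hab
    rw [Prod.dist_eq, max_lt_iff] at hab
    obtain ⟨hts, hAB⟩ := hab
    have fin : EMetric.hausdorffEdist (A.1 : Set X) (B.1 : Set X) ≠ ⊤ :=
      hausdorffEdist_ne_top_of_nonempty_of_bounded A.1.nonempty B.1.nonempty
        A.1.isCompact.isBounded B.1.isCompact.isBounded
    have hAB' : hausdorffDist (A.1 : Set X) (B.1 : Set X) < δ := hAB
    show hausdorffDist _ _ < ε
    refine lt_of_le_of_lt (hausdorffDist_le_of_mem_dist (r := ε / 2) (by positivity) ?_ ?_)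
      (by linarith)
    · rintro _ ⟨x, hx, rfl⟩
      obtain ⟨y, hy, hxy⟩ := exists_dist_lt_of_hausdorffDist_lt hx hAB' fin
      refine ⟨H (s, y), Set.mem_image_of_mem _ hy, le_of_lt (hδ' ?_)⟩
      rw [Prod.dist_eq]
      exact max_lt hts hxy
    · rintro _ ⟨y, hy, rfl⟩
      obtain ⟨x, hx, hxy⟩ := exists_dist_lt_of_hausdorffDist_lt' hy hAB' fin
      refine ⟨H (t, x), Set.mem_image_of_mem _ hx, le_of_lt ?_⟩
      rw [dist_comm]
      refine hδ' ?_
      rw [Prod.dist_eq]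
      exact max_lt hts hxy
  refine (contractible_iff_id_nullhomotopic _).2
    ⟨⟨⟨⟨{c}, isCompact_singleton⟩, Set.singleton_nonempty c⟩,
      Set.finite_singleton c, by simp; omega⟩, ⟨⟨⟨K, hKc⟩, ?_, ?_⟩⟩⟩
  · intro A
    apply Subtype.ext
    apply NonemptyCompacts.ext
    show (fun x => H (0, x)) '' (A.1 : Set X) = (A.1 : Set X)
    simp [H.apply_zero]
  · intro A
    apply Subtype.ext
    apply NonemptyCompacts.ext
    show (fun x => H (1, x)) '' (A.1 : Set X) = {c}
    have : (fun x => H (1, x)) = fun _ => c := by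
      funext x; simp [H.apply_one]
    rw [this]
    exact A.1.nonempty.image_const c
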